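/- Let x, y, z be pairwise distinct complex numbers with |x| = |y| = |z| = 1. Then there exist complex numbers a, b with |a|² − |b|² = 1 such that b̄w + ā ≠ 0 for w ∈ {x,y,z}, (ax + b)(b̄x + ā)⁻¹ = 1, (ay + b)(b̄y + ā)⁻¹ = −1, and (az + b)(b̄z + ā)⁻¹ equals either i or −i. -/

import Mathlib

open Complex

private lemma su11_aux (x y z A B c : ℂ)
    (hx1 : x * starRingEnd ℂ x = 1) (hy1 : y * starRingEnd ℂ y = 1)
    (hz1 : z * starRingEnd ℂ z = 1) (hc : c = Complex.I ∨ c = -Complex.I)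
    (h1 : A * x + B = 1 * (starRingEnd ℂ B * x + starRingEnd ℂ A))
    (h2 : A * y + B = -1 * (starRingEnd ℂ B * y + starRingEnd ℂ A))
    (h3 : A * z + B = c * (starRingEnd ℂ B * z + starRingEnd ℂ A))
    (hd : 0 < Complex.normSq A - Complex.normSq B) :
    ∃ a b : ℂ, ‖a‖ ^ 2 - ‖b‖ ^ 2 = 1 ∧
      (∀ w ∈ ({x, y, z} : Set ℂ), starRingEnd ℂ b * w + starRingEnd ℂ a ≠ 0) ∧
      (a * x + b) * (starRingEnd ℂ b * x + starRingEnd ℂ a)⁻¹ = 1 ∧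
      (a * y + b) * (starRingEnd ℂ b * y + starRingEnd ℂ a)⁻¹ = -1 ∧
      ((a * z + b) * (starRingEnd ℂ b * z + starRingEnd ℂ a)⁻¹ = Complex.I ∨
        (a * z + b) * (starRingEnd ℂ b * z + starRingEnd ℂ a)⁻¹ = -Complex.I) := by
  obtain ⟨t, ht, ht2⟩ : ∃ t : ℝ, 0 < t ∧ t * t = Complex.normSq A - Complex.normSq B :=
    ⟨Real.sqrt _, Real.sqrt_pos.mpr hd, Real.mul_self_sqrt hd.le⟩
  have htC : (t : ℂ) ≠ 0 := by exact_mod_cast ht.ne'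
  have key : ∀ w c' : ℂ, w * starRingEnd ℂ w = 1 →
      A * w + B = c' * (starRingEnd ℂ B * w + starRingEnd ℂ A) →
      starRingEnd ℂ (B / (t : ℂ)) * w + starRingEnd ℂ (A / (t : ℂ)) ≠ 0 ∧
      (A / (t : ℂ) * w + B / (t : ℂ)) *
        (starRingEnd ℂ (B / (t : ℂ)) * w + starRingEnd ℂ (A / (t : ℂ)))⁻¹ = c' := by
    intro w c' hw h
    have hw0 : w ≠ 0 := by rintro rfl; simp at hw
    have hden : starRingEnd ℂ B * w + starRingEnd ℂ A ≠ 0 := by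
      intro h0
      have hnum : A * w + B = 0 := by rw [h, h0, mul_zero]
      have e : (Complex.normSq B : ℂ) * w = (Complex.normSq A : ℂ) * w := by
        rw [← Complex.mul_conj B, ← Complex.mul_conj A]
        linear_combination (starRingEnd ℂ B * w) * hnum - (A * w) * h0
      have e2 : Complex.normSq B = Complex.normSq A := by
        have := mul_right_cancel₀ hw0 e
        exact_mod_cast this
      linarith
    have hrw : starRingEnd ℂ (B / (t : ℂ)) * w + starRingEnd ℂ (A / (t : ℂ))
        = (starRingEnd ℂ B * w + starRingEnd ℂ A) / (t : ℂ) := by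
      simp only [map_div₀, Complex.conj_ofReal]
      rw [div_mul_eq_mul_div, ← add_div]
    have hnum' : A / (t : ℂ) * w + B / (t : ℂ) = (A * w + B) / (t : ℂ) := by
      rw [div_mul_eq_mul_div, ← add_div]
    refine ⟨by rw [hrw]; exact div_ne_zero hden htC, ?_⟩
    rw [hnum', hrw, h, mul_div_assoc, mul_assoc,
      mul_inv_cancel₀ (div_ne_zero hden htC), mul_one]
  refine ⟨A / (t : ℂ), B / (t : ℂ), ?_, ?_, (key x 1 hx1 h1).2, (key y (-1) hy1 h2).2, ?_⟩
  · rw [Complex.sq_norm, Complex.sq_norm, Complex.normSq_div, Complex.normSq_div,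
      Complex.normSq_ofReal, div_sub_div_same, ← ht2]
    exact div_self (by positivity)
  · intro w hw
    simp only [Set.mem_insert_iff, Set.mem_singleton_iff] at hw
    rcases hw with rfl | rfl | rfl
    · exact (key w 1 hx1 h1).1
    · exact (key w (-1) hy1 h2).1
    · exact (key w c hz1 h3).1
  · rcases hc with rfl | rfl
    · exact Or.inl (key z Complex.I hz1 h3).2
    · exact Or.inr (key z (-Complex.I) hz1 h3).2

/-- Example IV.3 (triples): every triple of pairwise distinct points of the unit
circle is conjugate under `SU(1,1)` to `(1, -1, ±i)`. -/
theorem stmt16 (x y z : ℂ) (hx : ‖x‖ = 1) (hy : ‖y‖ = 1)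
    (hz : ‖z‖ = 1) (hxy : x ≠ y) (hyz : y ≠ z) (hxz : x ≠ z) :
    ∃ a b : ℂ, ‖a‖ ^ 2 - ‖b‖ ^ 2 = 1 ∧
      (∀ w ∈ ({x, y, z} : Set ℂ), starRingEnd ℂ b * w + starRingEnd ℂ a ≠ 0) ∧
      (a * x + b) * (starRingEnd ℂ b * x + starRingEnd ℂ a)⁻¹ = 1 ∧
      (a * y + b) * (starRingEnd ℂ b * y + starRingEnd ℂ a)⁻¹ = -1 ∧
      ((a * z + b) * (starRingEnd ℂ b * z + starRingEnd ℂ a)⁻¹ = Complex.I ∨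
        (a * z + b) * (starRingEnd ℂ b * z + starRingEnd ℂ a)⁻¹ = -Complex.I) := by
  have hx1 : x * starRingEnd ℂ x = 1 := by
    rw [Complex.mul_conj]
    norm_cast
    rw [Complex.normSq_eq_norm_sq, hx]; norm_num
  have hy1 : y * starRingEnd ℂ y = 1 := by
    rw [Complex.mul_conj]
    norm_cast
    rw [Complex.normSq_eq_norm_sq, hy]; norm_num
  have hz1 : z * starRingEnd ℂ z = 1 := by
    rw [Complex.mul_conj]
    norm_cast
    rw [Complex.normSq_eq_norm_sq, hz]; norm_num
  have hI : Complex.I ^ 2 = -1 := Complex.I_sq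
  set p : ℂ := Complex.I * (z - y) + (z - x) with hp
  set q : ℂ := -(Complex.I * x * (z - y)) - y * (z - x) with hq
  set r : ℂ := -(Complex.I * (z - y)) + (z - x) with hr
  set s : ℂ := Complex.I * x * (z - y) - y * (z - x) with hs
  set A1 : ℂ := p + starRingEnd ℂ s with hA1
  set B1 : ℂ := q + starRingEnd ℂ r with hB1
  set A2 : ℂ := Complex.I * (p - starRingEnd ℂ s) with hA2
  set B2 : ℂ := Complex.I * (q - starRingEnd ℂ r) with hB2
  have i1 : A1 * x + B1 = 1 * (starRingEnd ℂ B1 * x + starRingEnd ℂ A1) := by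
    simp only [hA1, hB1, hp, hq, hr, hs, map_add, map_sub, map_mul, map_neg,
      Complex.conj_conj, Complex.conj_I]
    linear_combination (-2*(starRingEnd ℂ z)*Complex.I + 2*(starRingEnd ℂ y)*Complex.I) * hx1
  have i2 : A1 * y + B1 = -1 * (starRingEnd ℂ B1 * y + starRingEnd ℂ A1) := by
    simp only [hA1, hB1, hp, hq, hr, hs, map_add, map_sub, map_mul, map_neg,
      Complex.conj_conj, Complex.conj_I]
    linear_combination (-2*(starRingEnd ℂ z) + 2*(starRingEnd ℂ x)) * hy1
  have i3 : A1 * z + B1 = Complex.I * (starRingEnd ℂ B1 * z + starRingEnd ℂ A1) := by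
    simp only [hA1, hB1, hp, hq, hr, hs, map_add, map_sub, map_mul, map_neg,
      Complex.conj_conj, Complex.conj_I]
    linear_combination (-(starRingEnd ℂ y) + (starRingEnd ℂ y)*Complex.I - (starRingEnd ℂ x)*Complex.I - (starRingEnd ℂ x)*Complex.I^2) * hz1 + ((starRingEnd ℂ z) - (starRingEnd ℂ y) - (starRingEnd ℂ x) + z*(starRingEnd ℂ x)*(starRingEnd ℂ y) + z^2 - y*z - x*z + x*y) * hI
  have i4 : A2 * x + B2 = 1 * (starRingEnd ℂ B2 * x + starRingEnd ℂ A2) := by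
    simp only [hA2, hB2, hp, hq, hr, hs, map_add, map_sub, map_mul, map_neg,
      Complex.conj_conj, Complex.conj_I]
    linear_combination (2*(starRingEnd ℂ z)*Complex.I^2 - 2*(starRingEnd ℂ y)*Complex.I^2) * hx1
  have i5 : A2 * y + B2 = -1 * (starRingEnd ℂ B2 * y + starRingEnd ℂ A2) := by
    simp only [hA2, hB2, hp, hq, hr, hs, map_add, map_sub, map_mul, map_neg,
      Complex.conj_conj, Complex.conj_I]
    linear_combination (2*(starRingEnd ℂ z)*Complex.I - 2*(starRingEnd ℂ x)*Complex.I) * hy1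
  have i6 : A2 * z + B2 = Complex.I * (starRingEnd ℂ B2 * z + starRingEnd ℂ A2) := by
    simp only [hA2, hB2, hp, hq, hr, hs, map_add, map_sub, map_mul, map_neg,
      Complex.conj_conj, Complex.conj_I]
    linear_combination ((starRingEnd ℂ y)*Complex.I - (starRingEnd ℂ y)*Complex.I^2 + (starRingEnd ℂ x)*Complex.I^2 + (starRingEnd ℂ x)*Complex.I^3) * hz1 + (-(starRingEnd ℂ z)*Complex.I + (starRingEnd ℂ y)*Complex.I + (starRingEnd ℂ x)*Complex.I - z*(starRingEnd ℂ x)*(starRingEnd ℂ y)*Complex.I + z^2*Complex.I - y*z*Complex.I - x*z*Complex.I + x*y*Complex.I) * hI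
  have hS_eq : ((Complex.normSq A1 : ℂ) - (Complex.normSq B1 : ℂ))
      + ((Complex.normSq A2 : ℂ) - (Complex.normSq B2 : ℂ)) = (8*z*(starRingEnd ℂ y)*Complex.I - 8*z*(starRingEnd ℂ x)*Complex.I - 8*y*(starRingEnd ℂ z)*Complex.I + 8*y*(starRingEnd ℂ x)*Complex.I + 8*x*(starRingEnd ℂ z)*Complex.I - 8*x*(starRingEnd ℂ y)*Complex.I) := by
    rw [← Complex.mul_conj A1, ← Complex.mul_conj B1, ← Complex.mul_conj A2,
      ← Complex.mul_conj B2]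
    simp only [hA1, hB1, hA2, hB2, hp, hq, hr, hs, map_add, map_sub, map_mul, map_neg,
      Complex.conj_conj, Complex.conj_I]
    linear_combination (2*z*(starRingEnd ℂ y)*Complex.I - 2*z*(starRingEnd ℂ y)*Complex.I^3 - 2*y*(starRingEnd ℂ z)*Complex.I + 2*y*(starRingEnd ℂ z)*Complex.I^3) * hx1 + (-2*z*(starRingEnd ℂ x)*Complex.I + 2*z*(starRingEnd ℂ x)*Complex.I^3 + 2*x*(starRingEnd ℂ z)*Complex.I - 2*x*(starRingEnd ℂ z)*Complex.I^3) * hy1 + (2*y*(starRingEnd ℂ x)*Complex.I - 2*y*(starRingEnd ℂ x)*Complex.I^3 - 2*x*(starRingEnd ℂ y)*Complex.I + 2*x*(starRingEnd ℂ y)*Complex.I^3) * hz1 + (2*(starRingEnd ℂ y)*(starRingEnd ℂ z)^2*Complex.I - 2*(starRingEnd ℂ y)^2*(starRingEnd ℂ z)*Complex.I - 2*(starRingEnd ℂ x)*(starRingEnd ℂ z)^2*Complex.I + 2*(starRingEnd ℂ x)*(starRingEnd ℂ y)^2*Complex.I + 2*(starRingEnd ℂ x)^2*(starRingEnd ℂ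 z)*Complex.I - 2*(starRingEnd ℂ x)^2*(starRingEnd ℂ y)*Complex.I - 4*z*(starRingEnd ℂ y)*Complex.I + 4*z*(starRingEnd ℂ x)*Complex.I + 4*y*(starRingEnd ℂ z)*Complex.I - 4*y*(starRingEnd ℂ x)*Complex.I - 2*y*z^2*Complex.I + 2*y^2*z*Complex.I - 4*x*(starRingEnd ℂ z)*Complex.I + 4*x*(starRingEnd ℂ y)*Complex.I + 2*x*z^2*Complex.I - 2*x*y^2*Complex.I - 2*x^2*z*Complex.I + 2*x^2*y*Complex.I) * hI
  have hN_sq : ((8*z*(starRingEnd ℂ y)*Complex.I - 8*z*(starRingEnd ℂ x)*Complex.I - 8*y*(starRingEnd ℂ z)*Complex.I + 8*y*(starRingEnd ℂ x)*Complex.I + 8*x*(starRingEnd ℂ z)*Complex.I - 8*x*(starRingEnd ℂ y)*Complex.I) : ℂ) ^ 2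
      = 64 * ((x - y) * (starRingEnd ℂ x - starRingEnd ℂ y))
        * ((x - z) * (starRingEnd ℂ x - starRingEnd ℂ z))
        * ((y - z) * (starRingEnd ℂ y - starRingEnd ℂ z)) := by
    linear_combination (-64*z*(starRingEnd ℂ z) - 128*z*(starRingEnd ℂ z)*Complex.I^2 + 64*z*(starRingEnd ℂ y) + 128*z*(starRingEnd ℂ y)*Complex.I^2 - 64*z^2*(starRingEnd ℂ z)^2 + 64*z^2*(starRingEnd ℂ y)^2 + 64*z^2*(starRingEnd ℂ x)*(starRingEnd ℂ z) - 64*z^2*(starRingEnd ℂ x)*(starRingEnd ℂ y) + 64*y*(starRingEnd ℂ z) + 128*y*(starRingEnd ℂ z)*Complex.I^2 - 64*y*(starRingEnd ℂ y) - 128*y*(starRingEnd ℂ y)*Complex.I^2 + 64*y^2*(starRingEnd ℂ z)^2 - 64*y^2*(starRingEnd ℂ y)^2 - 64*y^2*(starRingEnd ℂ x)*(starRingEnd ℂ z) + 64*y^2*(starRingEnd ℂ x)*(starRingEnd ℂ y) + 64*x*z*(starRingEnd ℂ z)^2 - 64*x*z*(starRingEnd ℂ y)^2 - 64*x*z*(starRingEnd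 ℂ x)*(starRingEnd ℂ z) + 64*x*z*(starRingEnd ℂ x)*(starRingEnd ℂ y) - 64*x*y*(starRingEnd ℂ z)^2 + 64*x*y*(starRingEnd ℂ y)^2 + 64*x*y*(starRingEnd ℂ x)*(starRingEnd ℂ z) - 64*x*y*(starRingEnd ℂ x)*(starRingEnd ℂ y)) * hx1 + (-128 - 128*Complex.I^2 - 64*z*(starRingEnd ℂ z) - 128*z*(starRingEnd ℂ z)*Complex.I^2 + 64*z*(starRingEnd ℂ x) + 128*z*(starRingEnd ℂ x)*Complex.I^2 - 64*z^2*(starRingEnd ℂ z)^2 + 64*z^2*(starRingEnd ℂ y)*(starRingEnd ℂ z) - 64*z^2*(starRingEnd ℂ x)*(starRingEnd ℂ y) + 64*z^2*(starRingEnd ℂ x)^2 - 64*y*(starRingEnd ℂ y) + 64*y*(starRingEnd ℂ x) + 64*y*z*(starRingEnd ℂ z)^2 - 64*y*z*(starRingEnd ℂ y)*(starRingEnd ℂ z) + 64*y*z*(starRingEnd ℂ x)*(starRingEnd ℂ y) - 64*y*z*(starRingEnd ℂ x)^2 + 64*x*(starRingEnd ℂ z) + 128*x*(starRingEnd ℂ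 z)*Complex.I^2 + 64*x*(starRingEnd ℂ y) - 64*x*y*(starRingEnd ℂ z)^2 + 64*x*y*(starRingEnd ℂ y)*(starRingEnd ℂ z) + 64*x^2*(starRingEnd ℂ z)^2 - 64*x^2*(starRingEnd ℂ y)*(starRingEnd ℂ z)) * hy1 + (-256 - 256*Complex.I^2 - 128*z*(starRingEnd ℂ z) + 64*z*(starRingEnd ℂ y) + 64*z*(starRingEnd ℂ x) + 64*y*(starRingEnd ℂ z) + 64*y*(starRingEnd ℂ x) + 128*y*(starRingEnd ℂ x)*Complex.I^2 + 64*y*z*(starRingEnd ℂ x)*(starRingEnd ℂ z) - 64*y*z*(starRingEnd ℂ x)^2 - 64*y^2*(starRingEnd ℂ x)*(starRingEnd ℂ z) + 64*y^2*(starRingEnd ℂ x)^2 + 64*x*(starRingEnd ℂ z) + 64*x*(starRingEnd ℂ y) + 128*x*(starRingEnd ℂ y)*Complex.I^2 + 64*x*z*(starRingEnd ℂ y)*(starRingEnd ℂ z) - 64*x*z*(starRingEnd ℂ y)^2 - 64*x^2*(starRingEnd ℂ y)*(starRingEnd ℂ z) + 64*x^2*(starRingEnd ℂ y)^2) * hz1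 + (-384 + 128*z*(starRingEnd ℂ y) + 128*z*(starRingEnd ℂ x) + 64*z^2*(starRingEnd ℂ y)^2 - 128*z^2*(starRingEnd ℂ x)*(starRingEnd ℂ y) + 64*z^2*(starRingEnd ℂ x)^2 + 128*y*(starRingEnd ℂ z) + 128*y*(starRingEnd ℂ x) - 128*y*z*(starRingEnd ℂ x)^2 + 64*y^2*(starRingEnd ℂ z)^2 - 128*y^2*(starRingEnd ℂ x)*(starRingEnd ℂ z) + 64*y^2*(starRingEnd ℂ x)^2 + 128*x*(starRingEnd ℂ z) + 128*x*(starRingEnd ℂ y) - 128*x*z*(starRingEnd ℂ y)^2 - 128*x*y*(starRingEnd ℂ z)^2 + 64*x^2*(starRingEnd ℂ z)^2 - 128*x^2*(starRingEnd ℂ y)*(starRingEnd ℂ z) + 64*x^2*(starRingEnd ℂ y)^2) * hI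
  have hxy0 : x - y ≠ 0 := sub_ne_zero.mpr hxy
  have hxz0 : x - z ≠ 0 := sub_ne_zero.mpr hxz
  have hyz0 : y - z ≠ 0 := sub_ne_zero.mpr hyz
  have hxy' : starRingEnd ℂ x - starRingEnd ℂ y ≠ 0 :=
    sub_ne_zero.mpr fun h => hxy ((starRingEnd ℂ).injective h)
  have hxz' : starRingEnd ℂ x - starRingEnd ℂ z ≠ 0 :=
    sub_ne_zero.mpr fun h => hxz ((starRingEnd ℂ).injective h)
  have hyz' : starRingEnd ℂ y - starRingEnd ℂ z ≠ 0 :=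
    sub_ne_zero.mpr fun h => hyz ((starRingEnd ℂ).injective h)
  have hRHS : 64 * ((x - y) * (starRingEnd ℂ x - starRingEnd ℂ y))
        * ((x - z) * (starRingEnd ℂ x - starRingEnd ℂ z))
        * ((y - z) * (starRingEnd ℂ y - starRingEnd ℂ z)) ≠ 0 :=
    mul_ne_zero (mul_ne_zero (mul_ne_zero (by norm_num) (mul_ne_zero hxy0 hxy'))
      (mul_ne_zero hxz0 hxz')) (mul_ne_zero hyz0 hyz')
  have hSne : Complex.normSq A1 - Complex.normSq B1
      + (Complex.normSq A2 - Complex.normSq B2) ≠ 0 := by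
    intro h0
    apply hRHS
    rw [← hN_sq, ← hS_eq]
    have h0' : ((Complex.normSq A1 : ℂ) - (Complex.normSq B1 : ℂ))
        + ((Complex.normSq A2 : ℂ) - (Complex.normSq B2 : ℂ)) = 0 := by exact_mod_cast h0
    rw [h0']
    norm_num
  rcases hSne.lt_or_gt with hneg | hpos
  · by_cases h3 : 0 < Complex.normSq B1 - Complex.normSq A1
    · have hd3 : 0 < Complex.normSq (starRingEnd ℂ B1) - Complex.normSq (starRingEnd ℂ A1) := by
        simpa [Complex.normSq_conj] using h3
      have j1 : starRingEnd ℂ B1 * x + starRingEnd ℂ A1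
          = 1 * (starRingEnd ℂ (starRingEnd ℂ A1) * x + starRingEnd ℂ (starRingEnd ℂ B1)) := by
        simp only [hA1, hB1, hp, hq, hr, hs, map_add, map_sub, map_mul, map_neg,
          Complex.conj_conj, Complex.conj_I]
        linear_combination (2*(starRingEnd ℂ z)*Complex.I - 2*(starRingEnd ℂ y)*Complex.I) * hx1
      have j2 : starRingEnd ℂ B1 * y + starRingEnd ℂ A1
          = -1 * (starRingEnd ℂ (starRingEnd ℂ A1) * y + starRingEnd ℂ (starRingEnd ℂ B1)) := by
        simp only [hA1, hB1, hp, hq, hr, hs, map_add, map_sub, map_mul, map_neg,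
          Complex.conj_conj, Complex.conj_I]
        linear_combination (-2*(starRingEnd ℂ z) + 2*(starRingEnd ℂ x)) * hy1
      have j3 : starRingEnd ℂ B1 * z + starRingEnd ℂ A1
          = -Complex.I * (starRingEnd ℂ (starRingEnd ℂ A1) * z + starRingEnd ℂ (starRingEnd ℂ B1)) := by
        simp only [hA1, hB1, hp, hq, hr, hs, map_add, map_sub, map_mul, map_neg,
          Complex.conj_conj, Complex.conj_I]
        linear_combination (-(starRingEnd ℂ y) - (starRingEnd ℂ y)*Complex.I + (starRingEnd ℂ x)*Complex.I - (starRingEnd ℂ x)*Complex.I^2) * hz1 + ((starRingEnd ℂ z) - (starRingEnd ℂ y) - (starRingEnd ℂ x) + z*(starRingEnd ℂ x)*(starRingEnd ℂ y) + z^2 - y*z - x*z + x*y) * hI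
      exact su11_aux x y z (starRingEnd ℂ B1) (starRingEnd ℂ A1) (-Complex.I)
        hx1 hy1 hz1 (Or.inr rfl) j1 j2 j3 hd3
    · have h4 : 0 < Complex.normSq B2 - Complex.normSq A2 := by push_neg at h3; linarith
      have hd4 : 0 < Complex.normSq (starRingEnd ℂ B2) - Complex.normSq (starRingEnd ℂ A2) := by
        simpa [Complex.normSq_conj] using h4
      have j4 : starRingEnd ℂ B2 * x + starRingEnd ℂ A2
          = 1 * (starRingEnd ℂ (starRingEnd ℂ A2) * x + starRingEnd ℂ (starRingEnd ℂ B2)) := by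
        simp only [hA2, hB2, hp, hq, hr, hs, map_add, map_sub, map_mul, map_neg,
          Complex.conj_conj, Complex.conj_I]
        linear_combination (-2*(starRingEnd ℂ z)*Complex.I^2 + 2*(starRingEnd ℂ y)*Complex.I^2) * hx1
      have j5 : starRingEnd ℂ B2 * y + starRingEnd ℂ A2
          = -1 * (starRingEnd ℂ (starRingEnd ℂ A2) * y + starRingEnd ℂ (starRingEnd ℂ B2)) := by
        simp only [hA2, hB2, hp, hq, hr, hs, map_add, map_sub, map_mul, map_neg,
          Complex.conj_conj, Complex.conj_I]
        linear_combination (2*(starRingEnd ℂ z)*Complex.I - 2*(starRingEnd ℂ x)*Complex.I) * hy1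
      have j6 : starRingEnd ℂ B2 * z + starRingEnd ℂ A2
          = -Complex.I * (starRingEnd ℂ (starRingEnd ℂ A2) * z + starRingEnd ℂ (starRingEnd ℂ B2)) := by
        simp only [hA2, hB2, hp, hq, hr, hs, map_add, map_sub, map_mul, map_neg,
          Complex.conj_conj, Complex.conj_I]
        linear_combination ((starRingEnd ℂ y)*Complex.I + (starRingEnd ℂ y)*Complex.I^2 - (starRingEnd ℂ x)*Complex.I^2 + (starRingEnd ℂ x)*Complex.I^3) * hz1 + (-(starRingEnd ℂ z)*Complex.I + (starRingEnd ℂ y)*Complex.I + (starRingEnd ℂ x)*Complex.I - z*(starRingEnd ℂ x)*(starRingEnd ℂ y)*Complex.I + z^2*Complex.I - y*z*Complex.I - x*z*Complex.I + x*y*Complex.I) * hI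
      exact su11_aux x y z (starRingEnd ℂ B2) (starRingEnd ℂ A2) (-Complex.I)
        hx1 hy1 hz1 (Or.inr rfl) j4 j5 j6 hd4
  · by_cases h1p : 0 < Complex.normSq A1 - Complex.normSq B1
    · exact su11_aux x y z A1 B1 Complex.I hx1 hy1 hz1 (Or.inl rfl) i1 i2 i3 h1p
    · have h2p : 0 < Complex.normSq A2 - Complex.normSq B2 := by push_neg at h1p; linarith
      exact su11_aux x y z A2 B2 Complex.I hx1 hy1 hz1 (Or.inl rfl) i4 i5 i6 h2p
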